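/- Let $(\mathcal{F}_t)_{t\in[0,T]}$ be a filtration, $L$ a discrete random variable with finite range $E$ and $\mathbb{P}(L=x)>0$ for all $x\in E$, and suppose $\mathbb{P}(q^x_T>0)=1$ for every $x\in E$, where $q^x_t := \mathbb{P}(L=x|\mathcal{F}_t)/\mathbb{P}(L=x)$. Let $(N_t)$ be a bounded martingale with respect to $(\mathcal{F}_t)$. Then the process $(N_t/q^L_t)$ is a martingale with respect to the initially enlarged filtration $\mathcal{G}_t := \mathcal{F}_t\vee\sigma(L)$; in particular $\mathbb{E}[N_t\,h(L)\mathbf{1}_A/q^L_t] = \mathbb{E}[N_s\,h(L)\mathbf{1}_A/q^L_s]$ for all $s\le t$, $A\in\mathcal{F}_s$, and bounded $h:E\to\mathbb{R}$. -/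

import Mathlib

open MeasureTheory ProbabilityTheory

lemma my_bdd_integrable {Ω : Type*} {m0 : MeasurableSpace Ω} {μ : Measure Ω}
    [IsFiniteMeasure μ] {g : Ω → ℝ} (hg : AEStronglyMeasurable g μ) (C : ℝ)
    (h : ∀ ω, |g ω| ≤ C) : Integrable g μ := by
  refine Integrable.mono' (integrable_const C) hg ?_
  exact Filter.Eventually.of_forall fun ω => by simpa [Real.norm_eq_abs] using h ω

lemma my_sup_comap_structure {Ω E : Type*} {m : MeasurableSpace Ω} (L : Ω → E)
    {B : Set Ω} (hB : MeasurableSet[m ⊔ MeasurableSpace.comap L ⊤] B) (x : E) :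
    ∃ A : Set Ω, MeasurableSet[m] A ∧ B ∩ L ⁻¹' {x} = A ∩ L ⁻¹' {x} := by
  let P : Set Ω → Prop := fun S => ∀ y : E, ∃ A : Set Ω,
    MeasurableSet[m] A ∧ S ∩ L ⁻¹' {y} = A ∩ L ⁻¹' {y}
  have hempty : P ∅ := fun y => ⟨∅, MeasurableSet.empty, by simp⟩
  have hcompl : ∀ S, P S → P Sᶜ := by
    intro S hS y
    obtain ⟨A, hA, hSA⟩ := hS y
    refine ⟨Aᶜ, hA.compl, ?_⟩
    ext ω
    by_cases hω : ω ∈ L ⁻¹' {y}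
    · have hiff : ω ∈ S ↔ ω ∈ A := by
        have := Set.ext_iff.mp hSA ω
        simpa [hω] using this
      simp [hω, hiff]
    · simp [hω]
  have hunion : ∀ f : ℕ → Set Ω, (∀ n, P (f n)) → P (⋃ n, f n) := by
    intro f hf y
    choose A hA hfA using fun n => hf n y
    refine ⟨⋃ n, A n, MeasurableSet.iUnion hA, ?_⟩
    rw [Set.iUnion_inter, Set.iUnion_inter]
    exact Set.iUnion_congr hfA
  let m' : MeasurableSpace Ω :=
    { MeasurableSet' := P
      measurableSet_empty := hempty
      measurableSet_compl := hcompl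
      measurableSet_iUnion := hunion }
  have hle : m ⊔ MeasurableSpace.comap L ⊤ ≤ m' := by
    refine sup_le ?_ ?_
    · intro S hS y; exact ⟨S, hS, rfl⟩
    · rintro S ⟨C, -, rfl⟩ y
      by_cases hy : y ∈ C
      · refine ⟨Set.univ, (@MeasurableSet.univ Ω m), ?_⟩
        ext ω
        simp only [Set.mem_inter_iff, Set.mem_preimage, Set.mem_singleton_iff, Set.mem_univ,
          true_and]
        exact ⟨fun h => h.2, fun h => ⟨h ▸ hy, h⟩⟩
      · refine ⟨∅, (@MeasurableSet.empty Ω m), ?_⟩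
        ext ω
        simp only [Set.mem_inter_iff, Set.mem_preimage, Set.mem_singleton_iff,
          Set.mem_empty_iff_false, false_and, iff_false, not_and]
        intro h1 h2
        exact hy (h2 ▸ h1)
  exact hle B hB x

lemma my_sum_ind {Ω E : Type*} [Fintype E] (L : Ω → E) (F : E → Ω → ℝ) (ω : Ω) :
    F (L ω) ω = ∑ x : E, Set.indicator {ω' | L ω' = x} (fun _ => (1 : ℝ)) ω * F x ω := by
  classical
  rw [Finset.sum_eq_single (L ω)]
  · simp [Set.indicator_apply]
  · intro b _ hb
    have h0 : Set.indicator {ω' | L ω' = b} (fun _ => (1 : ℝ)) ω = 0 :=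
      Set.indicator_of_notMem (fun h => hb ((by simpa using h : L ω = b)).symm) _
    rw [h0, zero_mul]
  · simp

lemma my_indicator_decomp {Ω E : Type*} [Fintype E] (L : Ω → E) (B : Set Ω) (A : E → Set Ω)
    (hBA : ∀ x, B ∩ L ⁻¹' {x} = A x ∩ L ⁻¹' {x}) (F : E → Ω → ℝ) (ω : Ω) :
    B.indicator (fun ω => F (L ω) ω) ω
      = ∑ x : E, Set.indicator {ω' | L ω' = x} (fun _ => (1 : ℝ)) ω
          * (A x).indicator (F x) ω := by
  classical
  rw [Finset.sum_eq_single (L ω)]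
  · have h1 : Set.indicator {ω' | L ω' = L ω} (fun _ => (1 : ℝ)) ω = 1 := by
      simp [Set.indicator_apply]
    rw [h1, one_mul]
    have hiff : ω ∈ B ↔ ω ∈ A (L ω) := by
      have := Set.ext_iff.mp (hBA (L ω)) ω
      simpa using this
    by_cases hω : ω ∈ B
    · rw [Set.indicator_of_mem hω, Set.indicator_of_mem (hiff.mp hω)]
    · rw [Set.indicator_of_notMem hω, Set.indicator_of_notMem (fun h => hω (hiff.mpr h))]
  · intro b _ hb
    have h0 : Set.indicator {ω' | L ω' = b} (fun _ => (1 : ℝ)) ω = 0 :=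
      Set.indicator_of_notMem (fun h => hb ((by simpa using h : L ω = b)).symm) _
    rw [h0, zero_mul]
  · simp

lemma my_condexp_pos {Ω : Type*} {m m0 : MeasurableSpace Ω} (hm : m ≤ m0)
    {μ : Measure Ω} [IsFiniteMeasure μ] {Y : Ω → ℝ} (hY : Integrable Y μ)
    (hpos : ∀ᵐ ω ∂μ, 0 < Y ω) : ∀ᵐ ω ∂μ, 0 < (μ[Y|m]) ω := by
  have hsm : StronglyMeasurable[m] (μ[Y|m]) := stronglyMeasurable_condExp
  have hBm : MeasurableSet[m] ((μ[Y|m]) ⁻¹' Set.Iic 0) :=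
    hsm.measurable measurableSet_Iic
  set B : Set Ω := (μ[Y|m]) ⁻¹' Set.Iic 0 with hBdef
  have hB0 : MeasurableSet[m0] B := hm _ hBm
  have h1 : ∫ ω in B, Y ω ∂μ = ∫ ω in B, (μ[Y|m]) ω ∂μ := (setIntegral_condExp hm hY hBm).symm
  have h2 : ∫ ω in B, (μ[Y|m]) ω ∂μ ≤ 0 := setIntegral_nonpos hB0 fun ω hω => hω
  have h3 : 0 ≤ ∫ ω in B, Y ω ∂μ :=
    setIntegral_nonneg_of_ae (hpos.mono fun ω h => h.le)
  have h4 : ∫ ω in B, Y ω ∂μ = 0 := le_antisymm (h1 ▸ h2) h3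
  have h5 : Y =ᵐ[μ.restrict B] 0 := by
    rw [← integral_eq_zero_iff_of_nonneg_ae (ae_restrict_of_ae (hpos.mono fun ω h => h.le))
      hY.integrableOn]
    exact h4
  have h6 : ∀ᵐ ω ∂μ.restrict B, False := by
    filter_upwards [h5, ae_restrict_of_ae hpos] with ω h1' h2'
    exact absurd h1' h2'.ne'
  have hμB : μ B = 0 := by
    have h7 : μ.restrict B = 0 := by
      rwa [Filter.eventually_false_iff_eq_bot, MeasureTheory.ae_eq_bot] at h6
    have := congrArg (fun ν : Measure Ω => ν Set.univ) h7
    simpa [Measure.restrict_apply_univ] using this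
  rw [ae_iff]
  have : {ω | ¬ 0 < (μ[Y|m]) ω} = B := by
    ext ω; simp [hBdef, not_lt]
  rwa [this]

lemma my_key_nonneg {Ω : Type*} {m0 : MeasurableSpace Ω} {μ : Measure Ω} [IsProbabilityMeasure μ]
    (ℱ : Filtration ℝ m0) {E : Type*} [MeasurableSpace E] [MeasurableSingletonClass E]
    (L : Ω → E) (hL : Measurable L) (x : E) (t : ℝ)
    (hpt : ∀ᵐ ω ∂μ, 0 < (μ[Set.indicator {ω' | L ω' = x} (fun _ => (1 : ℝ))|ℱ t]) ω)
    (g : Ω → ℝ) (hg : StronglyMeasurable[ℱ t] g) (hg0 : ∀ ω, 0 ≤ g ω)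
    (C : ℝ) (hgC : ∀ ω, g ω ≤ C) :
    Integrable (fun ω => Set.indicator {ω' | L ω' = x} (fun _ => (1 : ℝ)) ω * g ω
      / (μ[Set.indicator {ω' | L ω' = x} (fun _ => (1 : ℝ))|ℱ t]) ω) μ ∧
    ∫ ω, Set.indicator {ω' | L ω' = x} (fun _ => (1 : ℝ)) ω * g ω
      / (μ[Set.indicator {ω' | L ω' = x} (fun _ => (1 : ℝ))|ℱ t]) ω ∂μ = ∫ ω, g ω ∂μ := by
  classical
  set ind : Ω → ℝ := Set.indicator {ω' | L ω' = x} (fun _ => (1 : ℝ)) with hind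
  set p : Ω → ℝ := μ[ind|ℱ t] with hp
  have hmeasx : MeasurableSet {ω' | L ω' = x} := hL (measurableSet_singleton x)
  have hind_meas : Measurable ind := measurable_const.indicator hmeasx
  have hind_int : Integrable ind μ := (integrable_const (1 : ℝ)).indicator hmeasx
  have hind01 : ∀ ω, 0 ≤ ind ω ∧ ind ω ≤ 1 := fun ω => by
    by_cases h : ω ∈ {ω' | L ω' = x} <;> simp [hind, Set.indicator_apply, h]
  have hp_sm : StronglyMeasurable[ℱ t] p := stronglyMeasurable_condExp
  have hp_meas : Measurable p := (hp_sm.mono (ℱ.le t)).measurable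
  have hg_meas : Measurable g := (hg.mono (ℱ.le t)).measurable
  set C' : ℝ := max C 0 with hC'
  have hC'0 : 0 ≤ C' := le_max_right _ _
  have hgC' : ∀ ω, g ω ≤ C' := fun ω => le_trans (hgC ω) (le_max_left _ _)
  have hgabs : ∀ ω, |g ω| ≤ C' := fun ω => abs_le.2 ⟨by linarith [hg0 ω], hgC' ω⟩
  have hg_int : Integrable g μ := my_bdd_integrable hg_meas.aestronglyMeasurable C' hgabs
  -- pull-out property
  have pull : ∀ g' : Ω → ℝ, StronglyMeasurable[ℱ t] g' → ∀ D : ℝ, (∀ ω, |g' ω| ≤ D) →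
      ∫ ω, g' ω * ind ω ∂μ = ∫ ω, g' ω * p ω ∂μ := by
    intro g' hg' D hD
    have hint : Integrable (g' * ind) μ :=
      hind_int.bdd_mul (hg'.mono (ℱ.le t)).aestronglyMeasurable
        (Filter.Eventually.of_forall fun ω => by simpa [Real.norm_eq_abs] using hD ω)
    have hce : μ[g' * ind|ℱ t] =ᵐ[μ] g' * μ[ind|ℱ t] :=
      condExp_mul_of_stronglyMeasurable_left hg' hint hind_int
    have h1 : ∫ ω, (μ[g' * ind|ℱ t]) ω ∂μ = ∫ ω, (g' * ind) ω ∂μ := integral_condExp (ℱ.le t)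
    have h2 : ∫ ω, (μ[g' * ind|ℱ t]) ω ∂μ = ∫ ω, g' ω * p ω ∂μ :=
      integral_congr_ae (hce.mono fun ω hω => by rw [hω]; rfl)
    have h3 : ∫ ω, (g' * ind) ω ∂μ = ∫ ω, g' ω * ind ω ∂μ := rfl
    rw [← h3, ← h1, h2]
  -- truncations
  set φ : ℕ → Ω → ℝ := fun n ω => if 0 < p ω then min (1 / p ω) (n : ℝ) else 0 with hφ
  have hφ_smF : ∀ n, StronglyMeasurable[ℱ t] (φ n) := fun n =>
    (Measurable.ite (measurableSet_lt measurable_const hp_sm.measurable)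
      ((measurable_const.div hp_sm.measurable).min measurable_const)
      measurable_const).stronglyMeasurable
  have hφ_meas : ∀ n, Measurable (φ n) := fun n => ((hφ_smF n).mono (ℱ.le t)).measurable
  have hφ0 : ∀ n ω, 0 ≤ φ n ω := by
    intro n ω
    simp only [hφ]
    split
    · exact le_min (by positivity) (Nat.cast_nonneg n)
    · exact le_rfl
  have hφn : ∀ n ω, φ n ω ≤ (n : ℝ) := by
    intro n ω
    simp only [hφ]
    split
    · exact min_le_right _ _
    · exact Nat.cast_nonneg n
  have hφmono : ∀ ω, Monotone fun n => φ n ω := by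
    intro ω a b hab
    simp only [hφ]
    split
    · exact min_le_min le_rfl (Nat.cast_le.2 hab)
    · exact le_rfl
  have hφpos : ∀ n ω, 0 < p ω → φ n ω = min (1 / p ω) (n : ℝ) := fun n ω hω => if_pos hω
  -- step A
  have stepA : ∀ n : ℕ, ∫ ω, g ω * φ n ω * ind ω ∂μ = ∫ ω, g ω * φ n ω * p ω ∂μ := by
    intro n
    refine pull _ (hg.mul (hφ_smF n)) (C' * n) fun ω => ?_
    rw [abs_mul]
    refine mul_le_mul (hgabs ω) ?_ (abs_nonneg _) hC'0
    rw [abs_of_nonneg (hφ0 n ω)]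
    exact hφn n ω
  have hbddφ : ∀ n ω, |g ω * φ n ω| ≤ C' * n := by
    intro n ω
    rw [abs_mul]
    refine mul_le_mul (hgabs ω) ?_ (abs_nonneg _) hC'0
    rw [abs_of_nonneg (hφ0 n ω)]
    exact hφn n ω
  -- lintegral chain
  have key1 : ∫⁻ ω, ENNReal.ofReal (ind ω * g ω / p ω) ∂μ
      = ⨆ n : ℕ, ∫⁻ ω, ENNReal.ofReal (g ω * φ n ω * ind ω) ∂μ := by
    rw [← lintegral_iSup' (f := fun n ω => ENNReal.ofReal (g ω * φ n ω * ind ω)) (fun n =>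
        ((hg_meas.mul (hφ_meas n)).mul hind_meas).ennreal_ofReal.aemeasurable)
      (Filter.Eventually.of_forall fun ω a b hab => ENNReal.ofReal_le_ofReal
        (mul_le_mul_of_nonneg_right
          (mul_le_mul_of_nonneg_left (hφmono ω hab) (hg0 ω)) (hind01 ω).1))]
    refine lintegral_congr_ae ?_
    filter_upwards [hpt] with ω hω
    apply le_antisymm
    · refine le_iSup_of_le ⌈1 / p ω⌉₊ ?_
      apply ENNReal.ofReal_le_ofReal
      rw [hφpos _ _ hω, min_eq_left (Nat.le_ceil _)]
      apply le_of_eq; ring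
    · refine iSup_le fun n => ENNReal.ofReal_le_ofReal ?_
      rw [hφpos _ _ hω]
      calc g ω * min (1 / p ω) (n : ℝ) * ind ω ≤ g ω * (1 / p ω) * ind ω :=
            mul_le_mul_of_nonneg_right
              (mul_le_mul_of_nonneg_left (min_le_left _ _) (hg0 ω)) (hind01 ω).1
        _ = ind ω * g ω / p ω := by ring
  have key2 : ∀ n : ℕ, ∫⁻ ω, ENNReal.ofReal (g ω * φ n ω * ind ω) ∂μ
      = ∫⁻ ω, ENNReal.ofReal (g ω * φ n ω * p ω) ∂μ := by
    intro n
    have hint1 : Integrable (fun ω => g ω * φ n ω * ind ω) μ :=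
      hind_int.bdd_mul (hg_meas.mul (hφ_meas n)).aestronglyMeasurable
        (Filter.Eventually.of_forall fun ω => by rw [Real.norm_eq_abs]; exact hbddφ n ω)
    have hint2 : Integrable (fun ω => g ω * φ n ω * p ω) μ :=
      (integrable_condExp : Integrable (μ[ind|ℱ t]) μ).bdd_mul
        (hg_meas.mul (hφ_meas n)).aestronglyMeasurable
        (Filter.Eventually.of_forall fun ω => by rw [Real.norm_eq_abs]; exact hbddφ n ω)
    have hnn1 : 0 ≤ᵐ[μ] fun ω => g ω * φ n ω * ind ω :=
      Filter.Eventually.of_forall fun ω =>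
        mul_nonneg (mul_nonneg (hg0 ω) (hφ0 n ω)) (hind01 ω).1
    have hnn2 : 0 ≤ᵐ[μ] fun ω => g ω * φ n ω * p ω :=
      hpt.mono fun ω hω => mul_nonneg (mul_nonneg (hg0 ω) (hφ0 n ω)) hω.le
    rw [← ofReal_integral_eq_lintegral_ofReal hint1 hnn1,
      ← ofReal_integral_eq_lintegral_ofReal hint2 hnn2, stepA n]
  have key3 : (⨆ n : ℕ, ∫⁻ ω, ENNReal.ofReal (g ω * φ n ω * p ω) ∂μ)
      = ∫⁻ ω, ENNReal.ofReal (g ω) ∂μ := by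
    rw [← lintegral_iSup' (f := fun n ω => ENNReal.ofReal (g ω * φ n ω * p ω)) (fun n =>
        ((hg_meas.mul (hφ_meas n)).mul hp_meas).ennreal_ofReal.aemeasurable)
      (hpt.mono fun ω hω a b hab => ENNReal.ofReal_le_ofReal
        (mul_le_mul_of_nonneg_right
          (mul_le_mul_of_nonneg_left (hφmono ω hab) (hg0 ω)) hω.le))]
    refine lintegral_congr_ae ?_
    filter_upwards [hpt] with ω hω
    apply le_antisymm
    · refine iSup_le fun n => ENNReal.ofReal_le_ofReal ?_
      rw [hφpos _ _ hω]
      calc g ω * min (1 / p ω) (n : ℝ) * p ω ≤ g ω * (1 / p ω) * p ω :=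
            mul_le_mul_of_nonneg_right
              (mul_le_mul_of_nonneg_left (min_le_left _ _) (hg0 ω)) hω.le
        _ = g ω := by field_simp
    · refine le_iSup_of_le ⌈1 / p ω⌉₊ ?_
      apply ENNReal.ofReal_le_ofReal
      rw [hφpos _ _ hω, min_eq_left (Nat.le_ceil _)]
      apply le_of_eq
      field_simp
  have key4 : ∫⁻ ω, ENNReal.ofReal (ind ω * g ω / p ω) ∂μ = ENNReal.ofReal (∫ ω, g ω ∂μ) := by
    rw [key1, iSup_congr key2, key3,
      ofReal_integral_eq_lintegral_ofReal hg_int (Filter.Eventually.of_forall hg0)]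
  have hnn_ae : 0 ≤ᵐ[μ] fun ω => ind ω * g ω / p ω :=
    hpt.mono fun ω hω => div_nonneg (mul_nonneg (hind01 ω).1 (hg0 ω)) hω.le
  have hsm_ae : AEStronglyMeasurable (fun ω => ind ω * g ω / p ω) μ :=
    ((hind_meas.mul hg_meas).div hp_meas).aestronglyMeasurable
  have hfin : Integrable (fun ω => ind ω * g ω / p ω) μ := by
    refine ⟨hsm_ae, ?_⟩
    rw [hasFiniteIntegral_iff_ofReal hnn_ae, key4]
    exact ENNReal.ofReal_lt_top
  have hval : ∫ ω, ind ω * g ω / p ω ∂μ = ∫ ω, g ω ∂μ := by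
    rw [integral_eq_lintegral_of_nonneg_ae hnn_ae hsm_ae, key4,
      ENNReal.toReal_ofReal (integral_nonneg hg0)]
  exact ⟨hfin, hval⟩
lemma my_key {Ω : Type*} {m0 : MeasurableSpace Ω} {μ : Measure Ω} [IsProbabilityMeasure μ]
    (ℱ : Filtration ℝ m0) {E : Type*} [MeasurableSpace E] [MeasurableSingletonClass E]
    (L : Ω → E) (hL : Measurable L) (x : E) (hx : 0 < μ {ω' | L ω' = x}) (t : ℝ)
    (hpt : ∀ᵐ ω ∂μ, 0 < (μ[Set.indicator {ω' | L ω' = x} (fun _ => (1 : ℝ))|ℱ t]) ω)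
    (g : Ω → ℝ) (hg : StronglyMeasurable[ℱ t] g)
    (C : ℝ) (hgC : ∀ ω, |g ω| ≤ C) :
    Integrable (fun ω => Set.indicator {ω' | L ω' = x} (fun _ => (1 : ℝ)) ω * g ω
      / ((μ[Set.indicator {ω' | L ω' = x} (fun _ => (1 : ℝ))|ℱ t]) ω
         / (μ {ω' | L ω' = x}).toReal)) μ ∧
    ∫ ω, Set.indicator {ω' | L ω' = x} (fun _ => (1 : ℝ)) ω * g ω
      / ((μ[Set.indicator {ω' | L ω' = x} (fun _ => (1 : ℝ))|ℱ t]) ω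
         / (μ {ω' | L ω' = x}).toReal) ∂μ
      = (μ {ω' | L ω' = x}).toReal * ∫ ω, g ω ∂μ := by
  classical
  set ind : Ω → ℝ := Set.indicator {ω' | L ω' = x} (fun _ => (1 : ℝ)) with hind
  set p : Ω → ℝ := μ[ind|ℱ t] with hp
  set c : ℝ := (μ {ω' | L ω' = x}).toReal with hc
  have hc0 : 0 < c := ENNReal.toReal_pos hx.ne' (measure_ne_top μ _)
  set M : ℝ := max C 0 with hM
  have hM0 : 0 ≤ M := le_max_right _ _
  have hgM : ∀ ω, |g ω| ≤ M := fun ω => le_trans (hgC ω) (le_max_left _ _)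
  set g1 : Ω → ℝ := fun ω => g ω + M with hg1
  set g2 : Ω → ℝ := fun _ => M with hg2
  have hg1sm : StronglyMeasurable[ℱ t] g1 := hg.add stronglyMeasurable_const
  have hg10 : ∀ ω, 0 ≤ g1 ω := fun ω => by
    have := abs_le.1 (hgM ω); simp only [hg1]; linarith [this.1]
  have hg1M : ∀ ω, g1 ω ≤ 2 * M := fun ω => by
    have := abs_le.1 (hgM ω); simp only [hg1]; linarith [this.2]
  have k1 := my_key_nonneg ℱ L hL x t hpt g1 hg1sm hg10 (2 * M) hg1M
  have k2 := my_key_nonneg ℱ L hL x t hpt g2 stronglyMeasurable_const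
    (fun _ => hM0) M (fun _ => le_rfl)
  have hg_meas : Measurable g := (hg.mono (ℱ.le t)).measurable
  have hg_int : Integrable g μ := my_bdd_integrable hg_meas.aestronglyMeasurable M hgM
  have hfun : (fun ω => ind ω * g ω / (p ω / c))
      = fun ω => c * (ind ω * g1 ω / p ω) - c * (ind ω * g2 ω / p ω) := by
    funext ω
    rw [div_div_eq_mul_div]
    simp only [hg1, hg2]
    ring
  have hint : Integrable (fun ω => ind ω * g ω / (p ω / c)) μ := by
    rw [hfun]
    exact (k1.1.const_mul c).sub (k2.1.const_mul c)
  refine ⟨hint, ?_⟩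
  rw [hfun, integral_sub (k1.1.const_mul c) (k2.1.const_mul c),
    integral_const_mul, integral_const_mul, k1.2, k2.2]
  have h1 : ∫ ω, g1 ω ∂μ = (∫ ω, g ω ∂μ) + M := by
    simp only [hg1]
    rw [integral_add hg_int (integrable_const M), integral_const]
    simp
  have h2 : ∫ ω, g2 ω ∂μ = M := by
    simp only [hg2]; rw [integral_const]; simp
  rw [h1, h2]; ring
/-- Let `L` be a discrete random variable with finite range, all atoms
of positive probability, `q^x_t := P(L = x | 𝓕_t)/P(L = x)`, and suppose
`P(q^x_T > 0) = 1` for every `x`. If `N` is a bounded `𝓕`-martingale, then `N/q^L`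
is a martingale for the initially enlarged filtration `𝓖_t = 𝓕_t ⊔ σ(L)` on `[0,T]`;
in particular `E[N_t h(L) 1_A / q^L_t] = E[N_s h(L) 1_A / q^L_s]` for `s ≤ t ≤ T`,
`A ∈ 𝓕_s` and bounded `h`. -/
theorem value_info_stmt16
    {Ω : Type*} {m0 : MeasurableSpace Ω} (μ : Measure Ω) [IsProbabilityMeasure μ]
    (ℱ : Filtration ℝ m0)
    {E : Type*} [Fintype E] [MeasurableSpace E] [MeasurableSingletonClass E]
    (L : Ω → E) (hL : Measurable L)
    (hpos : ∀ x : E, 0 < μ {ω | L ω = x})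
    (T : ℝ) (hT : 0 ≤ T)
    (q : ℝ → E → Ω → ℝ)
    (hq : ∀ t x, q t x =
      fun ω => (μ[Set.indicator {ω' | L ω' = x} (fun _ => (1 : ℝ)) | ℱ t]) ω
        / (μ {ω' | L ω' = x}).toReal)
    (hqT : ∀ x : E, ∀ᵐ ω ∂μ, 0 < q T x ω)
    (N : ℝ → Ω → ℝ) (hN : Martingale N ℱ μ)
    (hNbdd : ∃ C : ℝ, ∀ t ω, |N t ω| ≤ C) :
    (∀ s t : ℝ, s ≤ t → t ≤ T →
      μ[(fun ω => N t ω / q t (L ω) ω) | (ℱ s) ⊔ (MeasurableSpace.comap L ⊤)]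
        =ᵐ[μ] fun ω => N s ω / q s (L ω) ω)
    ∧ (∀ s t : ℝ, s ≤ t → t ≤ T → ∀ A : Set Ω, MeasurableSet[ℱ s] A →
        ∀ h : E → ℝ,
        ∫ ω, N t ω * h (L ω) * Set.indicator A (fun _ => (1 : ℝ)) ω / q t (L ω) ω ∂μ
          = ∫ ω, N s ω * h (L ω) * Set.indicator A (fun _ => (1 : ℝ)) ω / q s (L ω) ω ∂μ) := by
  classical
  obtain ⟨C0, hC0⟩ := hNbdd
  set M0 : ℝ := max C0 0 with hM0
  have hNb : ∀ u ω, |N u ω| ≤ M0 := fun u ω => le_trans (hC0 u ω) (le_max_left _ _)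
  have hcomap_le : MeasurableSpace.comap L ⊤ ≤ m0 := by
    rintro S ⟨U, -, rfl⟩
    exact hL (Set.toFinite U).measurableSet
  have hc0 : ∀ x : E, 0 < (μ {ω' | L ω' = x}).toReal := fun x =>
    ENNReal.toReal_pos (hpos x).ne' (measure_ne_top μ _)
  -- a.e. positivity of the conditional densities up to time T
  have hpt : ∀ t : ℝ, t ≤ T → ∀ x : E,
      ∀ᵐ ω ∂μ, 0 < (μ[Set.indicator {ω' | L ω' = x} (fun _ => (1 : ℝ))|ℱ t]) ω := by
    intro t htT x
    have hT' : ∀ᵐ ω ∂μ,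
        0 < (μ[Set.indicator {ω' | L ω' = x} (fun _ => (1 : ℝ))|ℱ T]) ω := by
      have h1 := hqT x
      rw [hq] at h1
      filter_upwards [h1] with ω hω
      rcases div_pos_iff.1 hω with ⟨h2, -⟩ | ⟨-, h2⟩
      · exact h2
      · exact absurd (hc0 x) (not_lt.2 h2.le)
    have htow := condExp_condExp_of_le (μ := μ) (ℱ.mono htT) (ℱ.le T)
      (f := Set.indicator {ω' | L ω' = x} (fun _ => (1 : ℝ)))
    have hposc := my_condexp_pos (ℱ.le t) (integrable_condExp) hT'
    filter_upwards [htow, hposc] with ω h1 h2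
    exact h1 ▸ h2
  -- the central computation
  have key' : ∀ u : ℝ, u ≤ T → ∀ x : E, ∀ g : Ω → ℝ, StronglyMeasurable[ℱ u] g →
      ∀ C : ℝ, (∀ ω, |g ω| ≤ C) →
      Integrable (fun ω => Set.indicator {ω' | L ω' = x} (fun _ => (1 : ℝ)) ω * g ω
        / ((μ[Set.indicator {ω' | L ω' = x} (fun _ => (1 : ℝ))|ℱ u]) ω
           / (μ {ω' | L ω' = x}).toReal)) μ ∧
      ∫ ω, Set.indicator {ω' | L ω' = x} (fun _ => (1 : ℝ)) ω * g ω
        / ((μ[Set.indicator {ω' | L ω' = x} (fun _ => (1 : ℝ))|ℱ u]) ω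
           / (μ {ω' | L ω' = x}).toReal) ∂μ
        = (μ {ω' | L ω' = x}).toReal * ∫ ω, g ω ∂μ :=
    fun u huT x g hg C hC => my_key ℱ L hL x (hpos x) u (hpt u huT x) g hg C hC
  simp only [hq]
  constructor
  · -- part 1
    intro s t hst htT
    have hsT : s ≤ T := le_trans hst htT
    have hmle : (ℱ s ⊔ MeasurableSpace.comap L ⊤) ≤ m0 := sup_le (ℱ.le s) hcomap_le
    -- integrability of both processes
    have hfint : ∀ u : ℝ, u ≤ T → Integrable (fun ω => N u ω
        / ((μ[Set.indicator {ω' | L ω' = L ω} (fun _ => (1 : ℝ))|ℱ u]) ω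
           / (μ {ω' | L ω' = L ω}).toReal)) μ := by
      intro u huT
      have heq : (fun ω => N u ω
          / ((μ[Set.indicator {ω' | L ω' = L ω} (fun _ => (1 : ℝ))|ℱ u]) ω
             / (μ {ω' | L ω' = L ω}).toReal))
          = fun ω => ∑ x : E, Set.indicator {ω' | L ω' = x} (fun _ => (1 : ℝ)) ω
              * (N u ω / ((μ[Set.indicator {ω' | L ω' = x} (fun _ => (1 : ℝ))|ℱ u]) ω
                 / (μ {ω' | L ω' = x}).toReal)) :=
        funext fun ω => my_sum_ind L (fun x ω => N u ω
          / ((μ[Set.indicator {ω' | L ω' = x} (fun _ => (1 : ℝ))|ℱ u]) ω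
             / (μ {ω' | L ω' = x}).toReal)) ω
      rw [heq]
      refine integrable_finset_sum _ fun x _ => ?_
      exact (key' u huT x (N u) (hN.stronglyAdapted u) M0 (hNb u)).1.congr
        (Filter.Eventually.of_forall fun ω => mul_div_assoc _ _ _)
    haveI : SigmaFinite (μ.trim hmle) := inferInstance
    refine (ae_eq_condExp_of_forall_setIntegral_eq hmle (hfint t htT) ?_ ?_ ?_).symm
    · exact fun B hB _ => (hfint s hsT).integrableOn
    · -- set integral equality
      intro B hB _
      choose A hAmeas hABeq using fun x => my_sup_comap_structure L hB x
      have comp : ∀ u : ℝ, u ≤ T → (∀ x, MeasurableSet[ℱ u] (A x)) →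
          ∫ ω in B, N u ω / ((μ[Set.indicator {ω' | L ω' = L ω} (fun _ => (1 : ℝ))|ℱ u]) ω
             / (μ {ω' | L ω' = L ω}).toReal) ∂μ
          = ∑ x : E, (μ {ω' | L ω' = x}).toReal * ∫ ω in A x, N u ω ∂μ := by
        intro u huT hu
        have hint : ∀ x : E, Integrable (fun ω =>
            Set.indicator {ω' | L ω' = x} (fun _ => (1 : ℝ)) ω
              * ((A x).indicator (fun _ => (1 : ℝ)) ω * N u ω)
              / ((μ[Set.indicator {ω' | L ω' = x} (fun _ => (1 : ℝ))|ℱ u]) ω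
                 / (μ {ω' | L ω' = x}).toReal)) μ := by
          intro x
          refine (key' u huT x (fun ω => (A x).indicator (fun _ => (1 : ℝ)) ω * N u ω)
            ((stronglyMeasurable_const.indicator (hu x)).mul (hN.stronglyAdapted u)) M0 ?_).1
          intro ω
          rw [abs_mul]
          calc |(A x).indicator (fun _ => (1 : ℝ)) ω| * |N u ω|
              ≤ 1 * M0 := by
                refine mul_le_mul ?_ (hNb u ω) (abs_nonneg _) zero_le_one
                by_cases hω : ω ∈ A x <;>
                  simp [Set.indicator_of_mem, Set.indicator_of_notMem, hω]
            _ = M0 := one_mul _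
        have hptw : ∀ x : E, ∀ ω, Set.indicator {ω' | L ω' = x} (fun _ => (1 : ℝ)) ω
            * (A x).indicator (fun ω => N u ω
              / ((μ[Set.indicator {ω' | L ω' = x} (fun _ => (1 : ℝ))|ℱ u]) ω
                 / (μ {ω' | L ω' = x}).toReal)) ω
            = Set.indicator {ω' | L ω' = x} (fun _ => (1 : ℝ)) ω
              * ((A x).indicator (fun _ => (1 : ℝ)) ω * N u ω)
              / ((μ[Set.indicator {ω' | L ω' = x} (fun _ => (1 : ℝ))|ℱ u]) ω
                 / (μ {ω' | L ω' = x}).toReal) := by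
          intro x ω
          by_cases hω : ω ∈ A x
          · rw [Set.indicator_of_mem hω, Set.indicator_of_mem hω, one_mul, mul_div_assoc]
          · rw [Set.indicator_of_notMem hω, Set.indicator_of_notMem hω]
            simp
        calc ∫ ω in B, N u ω / ((μ[Set.indicator {ω' | L ω' = L ω} (fun _ => (1 : ℝ))|ℱ u]) ω
               / (μ {ω' | L ω' = L ω}).toReal) ∂μ
            = ∫ ω, B.indicator (fun ω => N u ω
                / ((μ[Set.indicator {ω' | L ω' = L ω} (fun _ => (1 : ℝ))|ℱ u]) ω
                   / (μ {ω' | L ω' = L ω}).toReal)) ω ∂μ :=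
              (integral_indicator (hmle _ hB)).symm
          _ = ∫ ω, ∑ x : E, Set.indicator {ω' | L ω' = x} (fun _ => (1 : ℝ)) ω
                * (A x).indicator (fun ω => N u ω
                  / ((μ[Set.indicator {ω' | L ω' = x} (fun _ => (1 : ℝ))|ℱ u]) ω
                     / (μ {ω' | L ω' = x}).toReal)) ω ∂μ := by
              refine integral_congr_ae (Filter.Eventually.of_forall fun ω => ?_)
              exact my_indicator_decomp L B A hABeq (fun x ω => N u ω
                / ((μ[Set.indicator {ω' | L ω' = x} (fun _ => (1 : ℝ))|ℱ u]) ω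
                   / (μ {ω' | L ω' = x}).toReal)) ω
          _ = ∑ x : E, ∫ ω, Set.indicator {ω' | L ω' = x} (fun _ => (1 : ℝ)) ω
                * ((A x).indicator (fun _ => (1 : ℝ)) ω * N u ω)
                / ((μ[Set.indicator {ω' | L ω' = x} (fun _ => (1 : ℝ))|ℱ u]) ω
                   / (μ {ω' | L ω' = x}).toReal) ∂μ := by
              rw [← integral_finset_sum]
              · refine integral_congr_ae (Filter.Eventually.of_forall fun ω => ?_)
                exact Finset.sum_congr rfl fun x _ => hptw x ω
              · exact fun x _ => hint x
          _ = ∑ x : E, (μ {ω' | L ω' = x}).toReal * ∫ ω in A x, N u ω ∂μ := by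
              refine Finset.sum_congr rfl fun x _ => ?_
              rw [(key' u huT x (fun ω => (A x).indicator (fun _ => (1 : ℝ)) ω * N u ω)
                ((stronglyMeasurable_const.indicator (hu x)).mul (hN.stronglyAdapted u)) M0 ?_).2]
              · congr 1
                rw [← integral_indicator (ℱ.le u _ (hu x))]
                refine integral_congr_ae (Filter.Eventually.of_forall fun ω => ?_)
                by_cases hω : ω ∈ A x <;> simp [Set.indicator_apply, hω]
              · intro ω
                rw [abs_mul]
                calc |(A x).indicator (fun _ => (1 : ℝ)) ω| * |N u ω|
                    ≤ 1 * M0 := by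
                      refine mul_le_mul ?_ (hNb u ω) (abs_nonneg _) zero_le_one
                      by_cases hω : ω ∈ A x <;>
                        simp [Set.indicator_of_mem, Set.indicator_of_notMem, hω]
                  _ = M0 := one_mul _
      rw [comp s hsT hAmeas, comp t htT fun x => ℱ.mono hst _ (hAmeas x)]
      refine Finset.sum_congr rfl fun x _ => ?_
      rw [hN.setIntegral_eq hst (hAmeas x)]
    · -- a.e. strong measurability
      have hsm : StronglyMeasurable[ℱ s ⊔ MeasurableSpace.comap L ⊤]
          (fun ω => N s ω / ((μ[Set.indicator {ω' | L ω' = L ω} (fun _ => (1 : ℝ))|ℱ s]) ω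
             / (μ {ω' | L ω' = L ω}).toReal)) := by
        have heq : (fun ω => N s ω
            / ((μ[Set.indicator {ω' | L ω' = L ω} (fun _ => (1 : ℝ))|ℱ s]) ω
               / (μ {ω' | L ω' = L ω}).toReal))
            = fun ω => ∑ x : E, Set.indicator {ω' | L ω' = x} (fun _ => (1 : ℝ)) ω
                * (N s ω / ((μ[Set.indicator {ω' | L ω' = x} (fun _ => (1 : ℝ))|ℱ s]) ω
                   / (μ {ω' | L ω' = x}).toReal)) :=
          funext fun ω => my_sum_ind L (fun x ω => N s ω
            / ((μ[Set.indicator {ω' | L ω' = x} (fun _ => (1 : ℝ))|ℱ s]) ω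
               / (μ {ω' | L ω' = x}).toReal)) ω
        rw [heq]
        apply Measurable.stronglyMeasurable
        refine Finset.measurable_sum _ fun x _ => ?_
        have hindm : Measurable[ℱ s ⊔ MeasurableSpace.comap L ⊤]
            (Set.indicator {ω' | L ω' = x} (fun _ => (1 : ℝ))) :=
          measurable_const.indicator
            ((le_sup_right : MeasurableSpace.comap L ⊤ ≤ _) _ ⟨{x}, trivial, rfl⟩)
        have hNm : Measurable[ℱ s ⊔ MeasurableSpace.comap L ⊤] (N s) :=
          ((hN.stronglyAdapted s).mono (le_sup_left : ℱ s ≤ _)).measurable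
        have hpm : Measurable[ℱ s ⊔ MeasurableSpace.comap L ⊤]
            (μ[Set.indicator {ω' | L ω' = x} (fun _ => (1 : ℝ))|ℱ s]) :=
          (stronglyMeasurable_condExp.mono (le_sup_left : ℱ s ≤ _)).measurable
        exact hindm.mul (hNm.div (hpm.div_const _))
      exact hsm.aestronglyMeasurable
  · -- part 2
    intro s t hst htT A hA h
    have hsT : s ≤ T := le_trans hst htT
    have comp : ∀ u : ℝ, u ≤ T → MeasurableSet[ℱ u] A →
        ∫ ω, N u ω * h (L ω) * A.indicator (fun _ => (1 : ℝ)) ω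
          / ((μ[Set.indicator {ω' | L ω' = L ω} (fun _ => (1 : ℝ))|ℱ u]) ω
             / (μ {ω' | L ω' = L ω}).toReal) ∂μ
        = ∑ x : E, (μ {ω' | L ω' = x}).toReal * (h x * ∫ ω in A, N u ω ∂μ) := by
      intro u huT hAu
      have hgsm : ∀ x : E, StronglyMeasurable[ℱ u]
          (fun ω => N u ω * h x * A.indicator (fun _ => (1 : ℝ)) ω) :=
        fun x => ((hN.stronglyAdapted u).mul_const (h x)).mul (stronglyMeasurable_const.indicator hAu)
      have hgb : ∀ x : E, ∀ ω, |N u ω * h x * A.indicator (fun _ => (1 : ℝ)) ω| ≤ M0 * |h x| := by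
        intro x ω
        rw [abs_mul, abs_mul]
        calc |N u ω| * |h x| * |A.indicator (fun _ => (1 : ℝ)) ω|
            ≤ M0 * |h x| * 1 := by
              refine mul_le_mul (mul_le_mul (hNb u ω) le_rfl (abs_nonneg _)
                (le_trans (abs_nonneg _) (hNb u ω))) ?_ (abs_nonneg _)
                (by positivity)
              by_cases hω : ω ∈ A <;>
                simp [Set.indicator_of_mem, Set.indicator_of_notMem, hω]
          _ = M0 * |h x| := mul_one _
      calc ∫ ω, N u ω * h (L ω) * A.indicator (fun _ => (1 : ℝ)) ω
            / ((μ[Set.indicator {ω' | L ω' = L ω} (fun _ => (1 : ℝ))|ℱ u]) ω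
               / (μ {ω' | L ω' = L ω}).toReal) ∂μ
          = ∫ ω, ∑ x : E, Set.indicator {ω' | L ω' = x} (fun _ => (1 : ℝ)) ω
              * (N u ω * h x * A.indicator (fun _ => (1 : ℝ)) ω
                / ((μ[Set.indicator {ω' | L ω' = x} (fun _ => (1 : ℝ))|ℱ u]) ω
                   / (μ {ω' | L ω' = x}).toReal)) ∂μ := by
            refine integral_congr_ae (Filter.Eventually.of_forall fun ω => ?_)
            exact my_sum_ind L (fun x ω => N u ω * h x * A.indicator (fun _ => (1 : ℝ)) ω
              / ((μ[Set.indicator {ω' | L ω' = x} (fun _ => (1 : ℝ))|ℱ u]) ω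
                 / (μ {ω' | L ω' = x}).toReal)) ω
        _ = ∑ x : E, ∫ ω, Set.indicator {ω' | L ω' = x} (fun _ => (1 : ℝ)) ω
              * (N u ω * h x * A.indicator (fun _ => (1 : ℝ)) ω)
              / ((μ[Set.indicator {ω' | L ω' = x} (fun _ => (1 : ℝ))|ℱ u]) ω
                 / (μ {ω' | L ω' = x}).toReal) ∂μ := by
            rw [← integral_finset_sum]
            · refine integral_congr_ae (Filter.Eventually.of_forall fun ω => ?_)
              exact Finset.sum_congr rfl fun x _ => (mul_div_assoc _ _ _).symm
            · exact fun x _ => (key' u huT x _ (hgsm x) (M0 * |h x|) (hgb x)).1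
        _ = ∑ x : E, (μ {ω' | L ω' = x}).toReal * (h x * ∫ ω in A, N u ω ∂μ) := by
            refine Finset.sum_congr rfl fun x _ => ?_
            rw [(key' u huT x _ (hgsm x) (M0 * |h x|) (hgb x)).2]
            congr 1
            rw [← integral_indicator (ℱ.le u _ hAu), ← integral_const_mul]
            refine integral_congr_ae (Filter.Eventually.of_forall fun ω => ?_)
            by_cases hω : ω ∈ A <;> simp [Set.indicator_apply, hω] <;> ring
    rw [comp t htT (ℱ.mono hst _ hA), comp s hsT hA]
    refine Finset.sum_congr rfl fun x _ => ?_
    rw [hN.setIntegral_eq hst hA]
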